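/- Let (x, a, p, s) = (0, 1/2, 0, 1) ∈ ℂ⁴. Then (s, ax−p) ∈ Γ, (x, a, p) lies in the closure of 𝔼, and (a, s, −p) lies in the closure of ℙ, but (x, a, p, s) does not lie in the closure of 𝔽. -/

import Mathlib

open Matrix

/-- The operator norm of a 2×2 complex matrix, acting on the Euclidean space ℂ². -/
noncomputable def opNorm (A : Matrix (Fin 2) (Fin 2) ℂ) : ℝ :=
  ‖LinearMap.toContinuousLinearMap (Matrix.toEuclideanLin A)‖

/-- The domain 𝔽 = {(a₁₁, a₂₂, det A, a₁₂ + a₂₁) : A ∈ M₂(ℂ), ‖A‖ < 1}. -/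
noncomputable def domF : Set (ℂ × ℂ × ℂ × ℂ) :=
  {w | ∃ A : Matrix (Fin 2) (Fin 2) ℂ, opNorm A < 1 ∧
    w = (A 0 0, A 1 1, A.det, A 0 1 + A 1 0)}

/-- The closed symmetrized bidisc Γ. -/
def GammaSet : Set (ℂ × ℂ) :=
  {w | ∃ z1 z2 : ℂ, ‖z1‖ ≤ 1 ∧ ‖z2‖ ≤ 1 ∧ w = (z1 + z2, z1 * z2)}

/-- The tetrablock 𝔼. -/
def tetraE : Set (ℂ × ℂ × ℂ) :=
  {x | ∀ z1 z2 : ℂ, ‖z1‖ ≤ 1 → ‖z2‖ ≤ 1 →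
    1 - x.1 * z1 - x.2.1 * z2 + x.2.2 * z1 * z2 ≠ 0}

/-- The pentablock ℙ = {(a₂₁, a₁₁ + a₂₂, det A) : A ∈ M₂(ℂ), ‖A‖ < 1}. -/
noncomputable def pentaP : Set (ℂ × ℂ × ℂ) :=
  {w | ∃ A : Matrix (Fin 2) (Fin 2) ℂ, opNorm A < 1 ∧
    w = (A 1 0, A 0 0 + A 1 1, A.det)}

open scoped Matrix.Norms.L2Operator in
lemma opNorm_eq_l2 (A : Matrix (Fin 2) (Fin 2) ℂ) : opNorm A = ‖A‖ := rfl

open scoped Matrix.Norms.L2Operator in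
lemma opNorm_conjT (A : Matrix (Fin 2) (Fin 2) ℂ) : opNorm Aᴴ = opNorm A := by
  rw [opNorm_eq_l2, opNorm_eq_l2, Matrix.l2_opNorm_conjTranspose]

open scoped Matrix.Norms.L2Operator in
lemma col_bound (A : Matrix (Fin 2) (Fin 2) ℂ) (h : opNorm A ≤ 1) (j : Fin 2) :
    ‖(A 0 j)‖ ^ 2 + ‖(A 1 j)‖ ^ 2 ≤ 1 := by
  have hm := Matrix.l2_opNorm_mulVec A (EuclideanSpace.single j (1:ℂ))
  rw [EuclideanSpace.norm_single, norm_one, mul_one] at hm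
  have hn : ‖(EuclideanSpace.equiv (Fin 2) ℂ).symm (A *ᵥ (EuclideanSpace.single j (1:ℂ)))‖
      = Real.sqrt (‖(A 0 j)‖ ^ 2 + ‖(A 1 j)‖ ^ 2) := by
    rw [EuclideanSpace.norm_eq]
    congr 1
    rw [Fin.sum_univ_two]
    simp [Matrix.mulVec, dotProduct, EuclideanSpace.single_apply]
  rw [hn] at hm
  rw [opNorm_eq_l2] at h
  have h2 : Real.sqrt (‖(A 0 j)‖ ^ 2 + ‖(A 1 j)‖ ^ 2) ≤ 1 := by
    calc _ ≤ ‖A‖ := hm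
    _ ≤ 1 := h
  nlinarith [Real.sq_sqrt (by positivity : (0:ℝ) ≤ ‖(A 0 j)‖ ^ 2 + ‖(A 1 j)‖ ^ 2),
    Real.sqrt_nonneg (‖(A 0 j)‖ ^ 2 + ‖(A 1 j)‖ ^ 2)]

lemma row_bound (A : Matrix (Fin 2) (Fin 2) ℂ) (h : opNorm A ≤ 1) (i : Fin 2) :
    ‖(A i 0)‖ ^ 2 + ‖(A i 1)‖ ^ 2 ≤ 1 := by
  have h' : opNorm Aᴴ ≤ 1 := by rw [opNorm_conjT]; exact h
  have := col_bound Aᴴ h' i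
  simpa [Matrix.conjTranspose_apply, norm_star, add_comm] using this

lemma opNorm_ones_le (t : ℝ) (ht : 0 ≤ t) :
    opNorm (Matrix.of fun _ _ => ((t:ℂ)/2)) ≤ t := by
  set M : Matrix (Fin 2) (Fin 2) ℂ := Matrix.of fun _ _ => ((t:ℂ)/2) with hM
  apply ContinuousLinearMap.opNorm_le_bound _ ht
  intro v
  rw [LinearMap.coe_toContinuousLinearMap', Matrix.toEuclideanLin_apply]
  rw [EuclideanSpace.norm_eq, EuclideanSpace.norm_eq]
  have hrw : (t : ℝ) * Real.sqrt (∑ i : Fin 2, ‖v i‖ ^ 2)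
      = Real.sqrt (t^2 * ∑ i : Fin 2, ‖v i‖ ^ 2) := by
    rw [Real.sqrt_mul (sq_nonneg t), Real.sqrt_sq ht]
  rw [hrw]
  apply Real.sqrt_le_sqrt
  rw [Fin.sum_univ_two, Fin.sum_univ_two]
  set w : Fin 2 → ℂ := (WithLp.equiv 2 (Fin 2 → ℂ)) v with hw
  have h0 : (M *ᵥ w) 0 = (t/2 : ℂ) * (w 0 + w 1) := by
    simp [hM, Matrix.mulVec, dotProduct, Fin.sum_univ_two]; ring
  have h1 : (M *ᵥ w) 1 = (t/2 : ℂ) * (w 0 + w 1) := by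
    simp [hM, Matrix.mulVec, dotProduct, Fin.sum_univ_two]; ring
  have hv0 : ‖v 0‖ = ‖w 0‖ := rfl
  have hv1 : ‖v 1‖ = ‖w 1‖ := rfl
  have hWL : ∀ i : Fin 2, ‖((WithLp.equiv 2 (Fin 2 → ℂ)).symm (M *ᵥ w) : EuclideanSpace ℂ (Fin 2)) i‖ = ‖(M *ᵥ w) i‖ := fun i => rfl
  simp only [hWL]
  change ‖(M *ᵥ w) 0‖ ^ 2 + ‖(M *ᵥ w) 1‖ ^ 2 ≤ t ^ 2 * (‖v 0‖ ^ 2 + ‖v 1‖ ^ 2)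
  rw [h0, h1, hv0, hv1]
  have habs : ‖(t/2 : ℂ) * (w 0 + w 1)‖ = t/2 * ‖w 0 + w 1‖ := by
    rw [norm_mul]
    congr 1
    rw [show ((t:ℂ)/2) = ((t/2 : ℝ) : ℂ) by push_cast; ring, Complex.norm_real,
      Real.norm_of_nonneg (by linarith)]
  rw [habs]
  have htri : ‖w 0 + w 1‖ ≤ ‖w 0‖ + ‖w 1‖ := norm_add_le _ _
  nlinarith [sq_nonneg t, mul_self_le_mul_self (norm_nonneg (w 0 + w 1)) htri,
    mul_nonneg (sq_nonneg t) (sq_nonneg (‖w 0‖ - ‖w 1‖))]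

/-- Example 2.11: for (x, a, p, s) = (0, 1/2, 0, 1), one has (s, ax−p) ∈ Γ,
(x, a, p) ∈ closure 𝔼 and (a, s, −p) ∈ closure ℙ, but (x, a, p, s) ∉ closure 𝔽. -/
theorem stmt10 (x a p s : ℂ)
    (hx : x = 0) (ha : a = 1 / 2) (hp : p = 0) (hs : s = 1) :
    (s, a * x - p) ∈ GammaSet ∧ (x, a, p) ∈ closure tetraE ∧
    (a, s, -p) ∈ closure pentaP ∧ (x, a, p, s) ∉ closure domF := by
  subst hx ha hp hs
  refine ⟨⟨1, 0, by norm_num, by norm_num, by norm_num⟩, ?_, ?_, ?_⟩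
  · -- tetrablock
    apply subset_closure
    intro z1 z2 h1 h2 heq
    simp only [mul_zero, zero_mul, sub_zero, zero_mul, add_zero] at heq
    have hz2 : z2 = 2 := by
      field_simp at heq
      linear_combination -heq
    rw [hz2] at h2
    norm_num at h2
  · -- pentablock
    rw [Metric.mem_closure_iff]
    intro ε hε
    set t : ℝ := 1 - min ε 1 / 2 with htdef
    have hmin : 0 < min ε 1 := lt_min hε one_pos
    have hmin1 : min ε 1 ≤ 1 := min_le_right _ _
    have ht0 : 0 ≤ t := by simp only [htdef]; linarith
    have ht1 : t < 1 := by simp only [htdef]; linarith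
    clear_value t
    set M : Matrix (Fin 2) (Fin 2) ℂ := Matrix.of fun _ _ => ((t:ℂ)/2) with hM
    refine ⟨(M 1 0, M 0 0 + M 1 1, M.det), ⟨M, lt_of_le_of_lt (opNorm_ones_le t ht0) ht1, rfl⟩, ?_⟩
    have e10 : M 1 0 = (t:ℂ)/2 := rfl
    have e00 : M 0 0 = (t:ℂ)/2 := rfl
    have e11 : M 1 1 = (t:ℂ)/2 := rfl
    have edet : M.det = 0 := by rw [Matrix.det_fin_two]; simp [hM]
    rw [e10, e00, e11, edet]
    have habs1 : ‖((1:ℂ)/2 - (t:ℂ)/2)‖ = (1 - t)/2 := by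
      rw [show ((1:ℂ)/2 - (t:ℂ)/2) = (((1 - t)/2 : ℝ) : ℂ) by push_cast; ring,
        Complex.norm_real, Real.norm_of_nonneg (by linarith)]
    have habs2 : ‖(1 - (t:ℂ)/2 - (t:ℂ)/2)‖ = 1 - t := by
      rw [show (1 - (t:ℂ)/2 - (t:ℂ)/2) = (((1 - t) : ℝ) : ℂ) by push_cast; ring,
        Complex.norm_real, Real.norm_of_nonneg (by linarith)]
    rw [Prod.dist_eq, Prod.dist_eq]
    simp only [Complex.dist_eq]
    have h1t : 1 - t < ε := by simp only [htdef]; have := min_le_left ε 1; linarith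
    have : ‖((1:ℂ) - ((t:ℂ)/2 + (t:ℂ)/2))‖ = 1 - t := by
      rw [show ((1:ℂ) - ((t:ℂ)/2 + (t:ℂ)/2)) = (((1 - t) : ℝ) : ℂ) by push_cast; ring,
        Complex.norm_real, Real.norm_of_nonneg (by linarith)]
    rw [habs1, this]
    simp only [neg_zero, sub_zero, norm_zero]
    rw [max_lt_iff, max_lt_iff]
    refine ⟨by linarith, by linarith, by linarith⟩
  · -- not in closure of domF
    intro hcl
    rw [Metric.mem_closure_iff] at hcl
    obtain ⟨w, hw, hd⟩ := hcl (1/1000) (by norm_num)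
    obtain ⟨A, hA, rfl⟩ := hw
    rw [Prod.dist_eq, Prod.dist_eq, Prod.dist_eq, max_lt_iff, max_lt_iff, max_lt_iff] at hd
    obtain ⟨d1, d2, d3, d4⟩ := hd
    simp only [Complex.dist_eq] at d1 d2 d3 d4
    have habs0 : ∀ z : ℂ, 0 ≤ ‖z‖ := fun z => norm_nonneg z
    have hA1 : opNorm A ≤ 1 := le_of_lt hA
    have hcol := col_bound A hA1 1
    have hrow := row_bound A hA1 1
    have h00 : ‖(A 0 0)‖ < 1/1000 := by
      rw [zero_sub, norm_neg] at d1; exact d1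
    have hhalf : ‖((1:ℂ)/2)‖ = 1/2 := by
      rw [show ((1:ℂ)/2) = (((1:ℝ)/2 : ℝ) : ℂ) by norm_num, Complex.norm_real]
      norm_num
    have h11l : (499:ℝ)/1000 ≤ ‖(A 1 1)‖ := by
      have h := norm_sub_norm_le ((1:ℂ)/2) ((1:ℂ)/2 - A 1 1)
      rw [sub_sub_cancel] at h
      rw [hhalf] at h
      linarith
    have h11u : ‖(A 1 1)‖ ≤ 1/2 + 1/1000 := by
      have h := norm_sub_le ((1:ℂ)/2) ((1:ℂ)/2 - A 1 1)
      rw [sub_sub_cancel] at h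
      rw [hhalf] at h
      linarith
    have hdet : ‖A.det‖ < 1/1000 := by
      rw [zero_sub, norm_neg] at d3; exact d3
    have hpq : ‖(A 0 1)‖ * ‖(A 1 0)‖ ≤ 16/10000 := by
      have hdf : A 0 1 * A 1 0 = A 0 0 * A 1 1 - A.det := by
        rw [Matrix.det_fin_two]; ring
      have e1 : ‖(A 0 1)‖ * ‖(A 1 0)‖
          = ‖(A 0 0 * A 1 1 - A.det)‖ := by
        rw [← norm_mul, hdf]
      rw [e1]
      have h2 := norm_sub_le (A 0 0 * A 1 1) A.det
      have h3 : ‖(A 0 0 * A 1 1)‖ = ‖(A 0 0)‖ * ‖(A 1 1)‖ :=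
        norm_mul _ _
      have h4 : ‖(A 0 0)‖ * ‖(A 1 1)‖ ≤ 1/1000 * (1/2 + 1/1000) :=
        mul_le_mul (le_of_lt h00) h11u (habs0 (A 1 1)) (by norm_num)
      linarith
    have hsum : 1 - 1/1000 ≤ ‖(A 0 1)‖ + ‖(A 1 0)‖ := by
      have h := norm_add_le (A 0 1) (A 1 0)
      have h2 := norm_sub_norm_le (1:ℂ) (1 - (A 0 1 + A 1 0))
      rw [sub_sub_cancel] at h2
      simp only [norm_one] at h2
      linarith
    have hp1 : ‖(A 0 1)‖ ≤ 8667/10000 := by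
      nlinarith [habs0 (A 0 1), habs0 (A 1 1)]
    have hq1 : ‖(A 1 0)‖ ≤ 8667/10000 := by
      nlinarith [habs0 (A 1 0), habs0 (A 1 1)]
    have hplo : (1323:ℝ)/10000 ≤ ‖(A 0 1)‖ := by linarith
    have hqlo : (1323:ℝ)/10000 ≤ ‖(A 1 0)‖ := by linarith
    nlinarith [mul_le_mul hplo hqlo (by norm_num : (0:ℝ) ≤ 1323/10000) (habs0 (A 0 1))]
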